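/- If G is a left ordered group and ℬ is a set of left-relatively convex subgroups of G, then the intersection of all members of ℬ is a left-relatively convex subgroup of G. -/

import Mathlib

/-- `r` is a left-invariant linear order on the group `G`. -/
def IsLeftOrder {G : Type*} [Group G] (r : G → G → Prop) : Prop :=
  IsLinearOrder G r ∧ ∀ g x y : G, r x y → r (g * x) (g * y)

/-- A group is left orderable if it admits a left-invariant linear order. -/
def LeftOrderable (G : Type*) [Group G] : Prop :=
  ∃ r : G → G → Prop, IsLeftOrder r

/-- The subgroup `K` is convex with respect to the order `r` on `G`. -/
def IsConvexWrt {G : Type*} [Group G] (r : G → G → Prop) (K : Subgroup G) : Prop :=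
  ∀ j g k : G, j ∈ K → k ∈ K → r j g → r g k → g ∈ K

/-- A subgroup is left-relatively convex if it is convex with respect to
some left order on the group. -/
def LeftRelConvex {G : Type*} [Group G] (K : Subgroup G) : Prop :=
  ∃ r : G → G → Prop, IsLeftOrder r ∧ IsConvexWrt r K

section Aux

variable {G : Type*} [Group G]

/-- Strict "coset" comparison induced by a left order `r` with `H` convex. -/
def ltR (r : G → G → Prop) (H : Subgroup G) (a b : G) : Prop :=
  a⁻¹ * b ∉ H ∧ r a b

theorem ltR_total {r : G → G → Prop} {H : Subgroup G}
    (hr : IsLeftOrder r) {a b : G} (hab : a⁻¹ * b ∉ H) :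
    ltR r H a b ∨ ltR r H b a := by
  have hba : b⁻¹ * a ∉ H := by
    intro h
    exact hab (by simpa using inv_mem h)
  rcases hr.1.total a b with h | h
  · exact Or.inl ⟨hab, h⟩
  · exact Or.inr ⟨hba, h⟩

theorem ltR_congr {r : G → G → Prop} {H : Subgroup G}
    (hr : IsLeftOrder r) (hc : IsConvexWrt r H) {a b a' b' : G}
    (hab : ltR r H a b) (ha : a⁻¹ * a' ∈ H) (hb : b⁻¹ * b' ∈ H) :
    ltR r H a' b' := by
  obtain ⟨hne, hrab⟩ := hab
  haveI := hr.1
  have hne' : a'⁻¹ * b' ∉ H := by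
    intro h
    apply hne
    have : (a⁻¹ * a') * (a'⁻¹ * b') * (b⁻¹ * b')⁻¹ ∈ H := mul_mem (mul_mem ha h) (inv_mem hb)
    simpa [mul_assoc] using this
  refine ⟨hne', ?_⟩
  by_contra hnot
  have h1 : r b' a' := (hr.1.total a' b').resolve_left hnot
  set x := a⁻¹ * b with hx
  have hx1 : r 1 x := by
    have := hr.2 a⁻¹ a b hrab
    simpa [hx] using this
  have hx2 : r (x * (b⁻¹ * b')) (a⁻¹ * a') := by
    have := hr.2 a⁻¹ b' a' h1
    simpa [hx, mul_assoc] using this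
  rcases hr.1.total 1 (x * (b⁻¹ * b')) with h2 | h2
  · -- 1 ≤ x·h ≤ h' : convexity gives x·h ∈ H, so x ∈ H
    have hmem : x * (b⁻¹ * b') ∈ H := hc 1 _ _ (one_mem H) ha h2 hx2
    exact hne (by simpa [mul_assoc] using mul_mem hmem (inv_mem hb))
  · -- x·h ≤ 1 : then h ≤ x⁻¹ ≤ 1, convexity gives x⁻¹ ∈ H
    have h3 : r (b⁻¹ * b') x⁻¹ := by
      have := hr.2 x⁻¹ (x * (b⁻¹ * b')) 1 h2
      simpa [mul_assoc] using this
    have h4 : r x⁻¹ 1 := by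
      have := hr.2 x⁻¹ 1 x hx1
      simpa using this
    have hmem : x⁻¹ ∈ H := hc _ _ _ hb (one_mem H) h3 h4
    exact hne (by simpa using inv_mem hmem)

theorem ltR_trans {r : G → G → Prop} {H : Subgroup G}
    (hr : IsLeftOrder r) (hc : IsConvexWrt r H) {a b c : G}
    (hab : ltR r H a b) (hbc : ltR r H b c) : ltR r H a c := by
  haveI := hr.1
  have hrac : r a c := hr.1.trans _ _ _ hab.2 hbc.2
  refine ⟨?_, hrac⟩
  intro hmem
  -- then c and a are in the same coset, so ltR b c gives ltR b a
  have hba : ltR r H b a := ltR_congr hr hc hbc (by simpa using one_mem H : b⁻¹ * b ∈ H)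
    (by simpa using inv_mem hmem)
  have : a = b := hr.1.antisymm _ _ hab.2 hba.2
  exact hab.1 (by simpa [this] using one_mem H)

theorem ltR_asymm {r : G → G → Prop} {H : Subgroup G}
    (hr : IsLeftOrder r) {a b : G}
    (hab : ltR r H a b) (hba : ltR r H b a) : False := by
  haveI := hr.1
  have : a = b := hr.1.antisymm _ _ hab.2 hba.2
  exact hab.1 (by simpa [this] using one_mem H)

variable {ι : Type*}

/-- The set of indices where `a` and `b` lie in different cosets. -/
def Dset (s : ι → Subgroup G) (a b : G) : Set ι := {i | a⁻¹ * b ∉ s i}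

theorem Dset_symm (s : ι → Subgroup G) (a b : G) : Dset s b a = Dset s a b := by
  ext i
  simp only [Dset, Set.mem_setOf_eq]
  constructor
  · intro h hmem; exact h (by simpa using inv_mem hmem)
  · intro h hmem; exact h (by simpa using inv_mem hmem)

theorem Dset_left (s : ι → Subgroup G) (g a b : G) : Dset s (g * a) (g * b) = Dset s a b := by
  ext i
  simp [Dset, mul_assoc]

/-- The minimum of a nonempty `Dset` for the well-ordering relation. -/
noncomputable def dmin (s : ι → Subgroup G) (a b : G) (h : (Dset s a b).Nonempty) : ι :=
  (IsWellFounded.wf (r := (WellOrderingRel : ι → ι → Prop))).min (Dset s a b) h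

theorem dmin_mem (s : ι → Subgroup G) (a b : G) (h : (Dset s a b).Nonempty) :
    dmin s a b h ∈ Dset s a b :=
  WellFounded.min_mem _ _ h

theorem dmin_not_lt (s : ι → Subgroup G) (a b : G) (h : (Dset s a b).Nonempty)
    {x : ι} (hx : x ∈ Dset s a b) : ¬ WellOrderingRel x (dmin s a b h) :=
  WellFounded.not_lt_min _ _ hx

theorem dmin_eq (s : ι → Subgroup G) (a b : G) (h : (Dset s a b).Nonempty)
    {M : ι} (hM : M ∈ Dset s a b) (hlow : ∀ x ∈ Dset s a b, ¬ WellOrderingRel x M) :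
    dmin s a b h = M := by
  rcases trichotomous_of (WellOrderingRel : ι → ι → Prop) (dmin s a b h) M with h1 | h1 | h1
  · exact absurd h1 (hlow _ (dmin_mem s a b h))
  · exact h1
  · exact absurd h1 (dmin_not_lt s a b h hM)

open Classical in
/-- The lexicographic combination of the orders `ord i` along the
well-ordering of `ι`, with ties broken by `r₀`. -/
noncomputable def bigR (r₀ : G → G → Prop) (s : ι → Subgroup G) (ord : ι → G → G → Prop)
    (a b : G) : Prop :=
  if h : (Dset s a b).Nonempty then ltR (ord (dmin s a b h)) (s (dmin s a b h)) a b
  else r₀ a b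

theorem bigR_of_empty {r₀ : G → G → Prop} {s : ι → Subgroup G} {ord : ι → G → G → Prop}
    {a b : G} (h : ¬ (Dset s a b).Nonempty) :
    bigR r₀ s ord a b ↔ r₀ a b := by
  simp only [bigR]
  rw [dif_neg h]

theorem bigR_of_nonempty {r₀ : G → G → Prop} {s : ι → Subgroup G} {ord : ι → G → G → Prop}
    {a b : G} (h : (Dset s a b).Nonempty) :
    bigR r₀ s ord a b ↔ ltR (ord (dmin s a b h)) (s (dmin s a b h)) a b := by
  simp only [bigR]
  rw [dif_pos h]


theorem bigR_refl {r₀ : G → G → Prop} {s : ι → Subgroup G} {ord : ι → G → G → Prop}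
    (hr₀ : IsLeftOrder r₀) (a : G) : bigR r₀ s ord a a := by
  have h : ¬ (Dset s a a).Nonempty := by
    rintro ⟨i, hi⟩
    exact hi (by simpa using one_mem (s i))
  rw [bigR_of_empty h]
  exact hr₀.1.refl a

theorem bigR_antisymm {r₀ : G → G → Prop} {s : ι → Subgroup G} {ord : ι → G → G → Prop}
    (hr₀ : IsLeftOrder r₀) (hord : ∀ i, IsLeftOrder (ord i)) {a b : G}
    (h1 : bigR r₀ s ord a b) (h2 : bigR r₀ s ord b a) : a = b := by
  by_cases h : (Dset s a b).Nonempty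
  · have h' : (Dset s b a).Nonempty := by rw [Dset_symm]; exact h
    rw [bigR_of_nonempty h] at h1
    rw [bigR_of_nonempty h'] at h2
    have heq : dmin s b a h' = dmin s a b h := by
      apply dmin_eq
      · rw [Dset_symm]; exact dmin_mem s a b h
      · intro x hx
        rw [Dset_symm] at hx
        exact dmin_not_lt s a b h hx
    rw [heq] at h2
    exact (ltR_asymm (hord _) h1 h2).elim
  · have h' : ¬ (Dset s b a).Nonempty := by rw [Dset_symm]; exact h
    rw [bigR_of_empty h] at h1
    rw [bigR_of_empty h'] at h2
    exact hr₀.1.antisymm _ _ h1 h2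

theorem bigR_total {r₀ : G → G → Prop} {s : ι → Subgroup G} {ord : ι → G → G → Prop}
    (hr₀ : IsLeftOrder r₀) (hord : ∀ i, IsLeftOrder (ord i)) (a b : G) :
    bigR r₀ s ord a b ∨ bigR r₀ s ord b a := by
  by_cases h : (Dset s a b).Nonempty
  · have h' : (Dset s b a).Nonempty := by rw [Dset_symm]; exact h
    have heq : dmin s b a h' = dmin s a b h := by
      apply dmin_eq
      · rw [Dset_symm]; exact dmin_mem s a b h
      · intro x hx
        rw [Dset_symm] at hx
        exact dmin_not_lt s a b h hx
    rcases ltR_total (hord (dmin s a b h)) (dmin_mem s a b h) with hl | hl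
    · left; rw [bigR_of_nonempty h]; exact hl
    · right; rw [bigR_of_nonempty h', heq]; exact hl
  · have h' : ¬ (Dset s b a).Nonempty := by rw [Dset_symm]; exact h
    rcases hr₀.1.total a b with hl | hl
    · left; rw [bigR_of_empty h]; exact hl
    · right; rw [bigR_of_empty h']; exact hl

theorem bigR_trans {r₀ : G → G → Prop} {s : ι → Subgroup G} {ord : ι → G → G → Prop}
    (hr₀ : IsLeftOrder r₀) (hord : ∀ i, IsLeftOrder (ord i))
    (hconv : ∀ i, IsConvexWrt (ord i) (s i)) {a b c : G}
    (h1 : bigR r₀ s ord a b) (h2 : bigR r₀ s ord b c) : bigR r₀ s ord a c := by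
  by_cases hU : (Dset s a b ∪ Dset s b c).Nonempty
  · set M := (IsWellFounded.wf (r := (WellOrderingRel : ι → ι → Prop))).min _ hU with hMdef
    have hMmem : M ∈ Dset s a b ∪ Dset s b c := WellFounded.min_mem _ _ hU
    have hMlow : ∀ x, WellOrderingRel x M →
        a⁻¹ * b ∈ s x ∧ b⁻¹ * c ∈ s x ∧ a⁻¹ * c ∈ s x := by
      intro x hx
      have hnU : x ∉ Dset s a b ∪ Dset s b c :=
        fun hmem => WellFounded.not_lt_min _ _ hmem hx
      have hx1 : a⁻¹ * b ∈ s x := not_not.1 fun hc' => hnU (Or.inl hc')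
      have hx2 : b⁻¹ * c ∈ s x := not_not.1 fun hc' => hnU (Or.inr hc')
      exact ⟨hx1, hx2, by simpa [mul_assoc] using mul_mem hx1 hx2⟩
    have hend : ltR (ord M) (s M) a c → bigR r₀ s ord a c := by
      intro hac
      have h3 : (Dset s a c).Nonempty := ⟨M, hac.1⟩
      have heq : dmin s a c h3 = M := by
        apply dmin_eq _ _ _ _ hac.1
        intro x hx hlt
        exact hx (hMlow x hlt).2.2
      rw [bigR_of_nonempty h3, heq]
      exact hac
    by_cases hM1 : M ∈ Dset s a b <;> by_cases hM2 : M ∈ Dset s b c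
    · -- both
      have hne1 : (Dset s a b).Nonempty := ⟨M, hM1⟩
      have hne2 : (Dset s b c).Nonempty := ⟨M, hM2⟩
      have heq1 : dmin s a b hne1 = M :=
        dmin_eq _ _ _ _ hM1 (fun x hx hlt => hx (hMlow x hlt).1)
      have heq2 : dmin s b c hne2 = M :=
        dmin_eq _ _ _ _ hM2 (fun x hx hlt => hx (hMlow x hlt).2.1)
      rw [bigR_of_nonempty hne1, heq1] at h1
      rw [bigR_of_nonempty hne2, heq2] at h2
      exact hend (ltR_trans (hord M) (hconv M) h1 h2)
    · -- M ∈ D1, M ∉ D2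
      have hne1 : (Dset s a b).Nonempty := ⟨M, hM1⟩
      have heq1 : dmin s a b hne1 = M :=
        dmin_eq _ _ _ _ hM1 (fun x hx hlt => hx (hMlow x hlt).1)
      rw [bigR_of_nonempty hne1, heq1] at h1
      have hbc : b⁻¹ * c ∈ s M := not_not.1 hM2
      exact hend (ltR_congr (hord M) (hconv M) h1
        (by simpa using one_mem (s M) : a⁻¹ * a ∈ s M) hbc)
    · -- M ∉ D1, M ∈ D2
      have hne2 : (Dset s b c).Nonempty := ⟨M, hM2⟩
      have heq2 : dmin s b c hne2 = M :=
        dmin_eq _ _ _ _ hM2 (fun x hx hlt => hx (hMlow x hlt).2.1)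
      rw [bigR_of_nonempty hne2, heq2] at h2
      have hab' : a⁻¹ * b ∈ s M := not_not.1 hM1
      exact hend (ltR_congr (hord M) (hconv M) h2
        (by simpa using inv_mem hab' : b⁻¹ * a ∈ s M)
        (by simpa using one_mem (s M) : c⁻¹ * c ∈ s M))
    · exact absurd hMmem (by simp [hM1, hM2])
  · have hab : ¬ (Dset s a b).Nonempty := fun ⟨i, hi⟩ => hU ⟨i, Or.inl hi⟩
    have hbc : ¬ (Dset s b c).Nonempty := fun ⟨i, hi⟩ => hU ⟨i, Or.inr hi⟩
    have hac : ¬ (Dset s a c).Nonempty := by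
      rintro ⟨i, hi⟩
      have hi1 : a⁻¹ * b ∈ s i := not_not.1 fun hc' => hab ⟨i, hc'⟩
      have hi2 : b⁻¹ * c ∈ s i := not_not.1 fun hc' => hbc ⟨i, hc'⟩
      exact hi (by simpa [mul_assoc] using mul_mem hi1 hi2)
    rw [bigR_of_empty hab] at h1
    rw [bigR_of_empty hbc] at h2
    rw [bigR_of_empty hac]
    exact hr₀.1.trans _ _ _ h1 h2

end Aux

theorem sInf_leftRelConvex {G : Type*} [Group G] (hG : LeftOrderable G)
    (B : Set (Subgroup G)) (hB : ∀ H ∈ B, LeftRelConvex H) :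
    LeftRelConvex (sInf B) := by
  classical
  obtain ⟨r₀, hr₀⟩ := hG
  haveI := hr₀.1
  choose ord hord hconv using fun H : ↥B => hB H H.2
  set s : ↥B → Subgroup G := fun H => (H : Subgroup G) with hs
  refine ⟨bigR r₀ s ord, ⟨?_, ?_⟩, ?_⟩
  · -- IsLinearOrder
    haveI : IsRefl G (bigR r₀ s ord) := ⟨fun a => bigR_refl hr₀ a⟩
    haveI : IsTrans G (bigR r₀ s ord) := ⟨fun _ _ _ => bigR_trans hr₀ hord hconv⟩
    haveI : IsPreorder G (bigR r₀ s ord) := ⟨⟩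
    haveI : IsAntisymm G (bigR r₀ s ord) := ⟨fun _ _ => bigR_antisymm hr₀ hord⟩
    haveI : IsPartialOrder G (bigR r₀ s ord) := ⟨⟩
    haveI : IsTotal G (bigR r₀ s ord) := ⟨fun a b => bigR_total hr₀ hord a b⟩
    exact ⟨⟩
  · -- left-invariant
    intro g x y hxy
    by_cases h : (Dset s x y).Nonempty
    · have h' : (Dset s (g * x) (g * y)).Nonempty := by rw [Dset_left]; exact h
      rw [bigR_of_nonempty h] at hxy
      rw [bigR_of_nonempty h']
      have heq : dmin s (g * x) (g * y) h' = dmin s x y h := by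
        apply dmin_eq
        · rw [Dset_left]; exact dmin_mem s x y h
        · intro i hi
          rw [Dset_left] at hi
          exact dmin_not_lt s x y h hi
      rw [heq]
      obtain ⟨h1, h2⟩ := hxy
      exact ⟨by simpa [mul_assoc] using h1, (hord _).2 g x y h2⟩
    · have h' : ¬ (Dset s (g * x) (g * y)).Nonempty := by rw [Dset_left]; exact h
      rw [bigR_of_empty h] at hxy
      rw [bigR_of_empty h']
      exact hr₀.2 g x y hxy
  · -- convexity
    intro j g k hj hk hjg hgk
    have hjk : ∀ i : ↥B, j⁻¹ * k ∈ s i := fun i =>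
      mul_mem (inv_mem ((Subgroup.mem_sInf.1 hj) i i.2)) ((Subgroup.mem_sInf.1 hk) i i.2)
    have hempty : ¬ (Dset s j g).Nonempty := by
      rintro hne
      rw [bigR_of_nonempty hne] at hjg
      set M := dmin s j g hne with hM
      have hMmem : j⁻¹ * g ∉ s M := dmin_mem s j g hne
      -- M is also the min of Dset s g k
      have hMgk : M ∈ Dset s g k := by
        intro hmem
        apply hMmem
        have : (j⁻¹ * k) * (g⁻¹ * k)⁻¹ ∈ s M := mul_mem (hjk M) (inv_mem hmem)
        simpa [mul_assoc] using this
      have h2 : (Dset s g k).Nonempty := ⟨M, hMgk⟩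
      have heq : dmin s g k h2 = M := by
        apply dmin_eq _ _ _ _ hMgk
        intro x hx hlt
        have hxjg : x ∉ Dset s j g := fun hmem => dmin_not_lt s j g hne hmem hlt
        simp only [Dset, Set.mem_setOf_eq, not_not] at hxjg
        apply hx
        have : (j⁻¹ * g)⁻¹ * (j⁻¹ * k) ∈ s x := mul_mem (inv_mem hxjg) (hjk x)
        simpa [mul_assoc] using this
      rw [bigR_of_nonempty h2, heq] at hgk
      -- now use convexity of s M
      have hgM : g ∈ s M := hconv M j g k ((Subgroup.mem_sInf.1 hj) M M.2)
        ((Subgroup.mem_sInf.1 hk) M M.2) hjg.2 hgk.2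
      exact hMmem (mul_mem (inv_mem ((Subgroup.mem_sInf.1 hj) M M.2)) hgM)
    rw [Subgroup.mem_sInf]
    intro H hH
    have : j⁻¹ * g ∈ H := by
      have := not_not.1 (fun hc => hempty ⟨⟨H, hH⟩, hc⟩)
      exact this
    have := mul_mem ((Subgroup.mem_sInf.1 hj) H hH) this
    simpa using this
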